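/- At most one orientation of a cycle is profitable: for a cycle of length n+1 with positive reserves and fee parameters r₁, r₂ ∈ (0,1], it is impossible that both the forward cycle and the reversed cycle admit profitable cyclic transactions, i.e., it cannot hold simultaneously that U(δ) > 0 for some δ > 0 and U_rev(δ') > 0 for some δ' > 0. -/

import Mathlib

/-- Constant-product AMM swap: output of swapping input `δ` through a pool with
input-side reserve `a`, output-side reserve `b` and fee parameters `r1, r2`. -/
noncomputable def swap (r1 r2 a b δ : ℝ) : ℝ := r1 * r2 * b * δ / (a + r1 * δ)

/-- Output of feeding an input through a sequence of pools; each pool is a pair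
`(input-side reserve, output-side reserve)` along the direction of trade. -/
noncomputable def cyclicOut (r1 r2 : ℝ) : List (ℝ × ℝ) → ℝ → ℝ
  | [], δ => δ
  | p :: ps, δ => cyclicOut r1 r2 ps (swap r1 r2 p.1 p.2 δ)

/-- Arbitrage index of a cycle of pools: product of output-side reserves divided
by product of input-side reserves. -/
noncomputable def arbIndex (ps : List (ℝ × ℝ)) : ℝ :=
  (ps.map Prod.snd).prod / (ps.map Prod.fst).prod

/-- The reversed cycle: the same pools in opposite order with the roles of the
two reserves of each pool interchanged. -/
def revPools (ps : List (ℝ × ℝ)) : List (ℝ × ℝ) := (ps.map Prod.swap).reverse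

/-- The updated pools after executing a cyclic transaction with input `δ`:
each pool's input-side reserve increases by the amount swapped in and its
output-side reserve decreases by the amount swapped out. -/
noncomputable def execPools (r1 r2 : ℝ) : List (ℝ × ℝ) → ℝ → List (ℝ × ℝ)
  | [], _ => []
  | p :: ps, δ =>
      (p.1 + δ, p.2 - swap r1 r2 p.1 p.2 δ) :: execPools r1 r2 ps (swap r1 r2 p.1 p.2 δ)

lemma cyclicOut_le (r1 r2 : ℝ) (hr1 : 0 < r1) (hr2 : 0 < r2) :
    ∀ (ps : List (ℝ × ℝ)), (∀ p ∈ ps, 0 < p.1 ∧ 0 < p.2) →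
    ∀ δ : ℝ, 0 ≤ δ → 0 ≤ cyclicOut r1 r2 ps δ ∧
      cyclicOut r1 r2 ps δ ≤ (ps.map (fun p => r1 * r2 * p.2 / p.1)).prod * δ := by
  intro ps
  induction ps with
  | nil => intro _ δ hδ; exact ⟨hδ, by simp [cyclicOut]⟩
  | cons p ps ih =>
    intro hpos δ hδ
    obtain ⟨ha, hb⟩ := hpos p List.mem_cons_self
    have hden : 0 < p.1 + r1 * δ := by positivity
    have hs0 : 0 ≤ swap r1 r2 p.1 p.2 δ := by
      unfold swap; positivity
    have hs : swap r1 r2 p.1 p.2 δ ≤ (r1 * r2 * p.2 / p.1) * δ := by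
      unfold swap
      rw [div_mul_eq_mul_div]
      apply div_le_div_of_nonneg_left (by positivity) ha
      nlinarith
    have hps := ih (fun q hq => hpos q (List.mem_cons_of_mem _ hq)) _ hs0
    refine ⟨hps.1, ?_⟩
    have hprod : 0 ≤ (ps.map (fun p => r1 * r2 * p.2 / p.1)).prod := by
      apply List.prod_nonneg
      intro x hx
      simp only [List.mem_map] at hx
      obtain ⟨q, hq, rfl⟩ := hx
      obtain ⟨hq1, hq2⟩ := hpos q (List.mem_cons_of_mem _ hq)
      positivity
    calc cyclicOut r1 r2 (p :: ps) δ
        = cyclicOut r1 r2 ps (swap r1 r2 p.1 p.2 δ) := rfl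
      _ ≤ (ps.map (fun p => r1 * r2 * p.2 / p.1)).prod * swap r1 r2 p.1 p.2 δ := hps.2
      _ ≤ (ps.map (fun p => r1 * r2 * p.2 / p.1)).prod * ((r1 * r2 * p.2 / p.1) * δ) := by
          exact mul_le_mul_of_nonneg_left hs hprod
      _ = ((p :: ps).map (fun p => r1 * r2 * p.2 / p.1)).prod * δ := by
          simp [List.prod_cons]; ring
/-- at most one orientation of a cycle is profitable: the forward
cycle and the reversed cycle cannot both admit profitable cyclic transactions. -/
theorem at_most_one_profitable_direction
    (n : ℕ) (ps : List (ℝ × ℝ)) (hlen : ps.length = n + 1)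
    (hpos : ∀ p ∈ ps, 0 < p.1 ∧ 0 < p.2)
    (r1 r2 : ℝ) (hr1 : 0 < r1) (hr1' : r1 ≤ 1) (hr2 : 0 < r2) (hr2' : r2 ≤ 1) :
    ¬ ((∃ δ : ℝ, 0 < δ ∧ cyclicOut r1 r2 ps δ - δ > 0) ∧
       (∃ δ' : ℝ, 0 < δ' ∧ cyclicOut r1 r2 (revPools ps) δ' - δ' > 0)) := by
  rintro ⟨⟨δ, hδ, hU⟩, ⟨δ', hδ', hU'⟩⟩
  set f : ℝ × ℝ → ℝ := fun p => r1 * r2 * p.2 / p.1 with hf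
  set g : ℝ × ℝ → ℝ := fun p => r1 * r2 * p.1 / p.2 with hg
  have hposrev : ∀ p ∈ revPools ps, 0 < p.1 ∧ 0 < p.2 := by
    intro p hp
    simp only [revPools, List.mem_reverse, List.mem_map] at hp
    obtain ⟨q, hq, rfl⟩ := hp
    exact ⟨(hpos q hq).2, (hpos q hq).1⟩
  -- 1 < P
  have h1 := (cyclicOut_le r1 r2 hr1 hr2 ps hpos δ hδ.le).2
  have hP : 1 < (ps.map f).prod := by nlinarith
  -- rewrite reverse product
  have hrev : ((revPools ps).map f).prod = (ps.map g).prod := by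
    simp only [revPools, List.map_reverse, List.prod_reverse, List.map_map]
    rfl
  have h2 := (cyclicOut_le r1 r2 hr1 hr2 (revPools ps) hposrev δ' hδ'.le).2
  rw [hrev] at h2
  have hQ : 1 < (ps.map g).prod := by nlinarith
  -- product of the two products
  have hPQ : (ps.map f).prod * (ps.map g).prod = ((r1 * r2) ^ 2) ^ ps.length := by
    rw [← List.prod_map_mul]
    have : ps.map (fun p => f p * g p) = List.replicate ps.length ((r1 * r2) ^ 2) := by
      rw [List.eq_replicate_iff]
      constructor
      · simp
      · intro x hx
        simp only [List.mem_map] at hx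
        obtain ⟨q, hq, rfl⟩ := hx
        obtain ⟨h1, h2⟩ := hpos q hq
        simp only [hf, hg]
        field_simp
    rw [this, List.prod_replicate]
  have hle1 : ((r1 * r2) ^ 2) ^ ps.length ≤ 1 := by
    apply pow_le_one₀ (by positivity)
    have hrr : 0 < r1 * r2 := mul_pos hr1 hr2
    have hrr1 : r1 * r2 ≤ 1 := by nlinarith
    nlinarith [mul_le_mul hrr1 hrr1 hrr.le one_pos.le]
  nlinarith
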